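/- For the quaternion algebra B = (w+1, -1 / F) over F = Q(w) with w^3 - 11w - 11 = 0, the Z_F-lattice generated by 1, i, k = (1 + (w^2+1)i + ij)/2, and the products of these elements is an order of B (i.e., it is closed under multiplication and consists of integral elements). -/

import Mathlib

open Quaternion

noncomputable section StmtAux

variable (F : Type) [Field F]

/-- The generic element `a + b i + c k + d (ik)` in coordinates; `u` plays the role of `1/2`. -/
def Xq (w u a b c d : F) : ℍ[F, w + 1, -1] :=
  ⟨a + c*u + d*((w+1)*(w^2+1))*u, b + c*(w^2+1)*u + d*u, d*(w+1)*u, c*u⟩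

theorem Xq_add (w u a b c d a' b' c' d' : F) :
    Xq F w u a b c d + Xq F w u a' b' c' d' = Xq F w u (a+a') (b+b') (c+c') (d+d') := by
  ext <;> (show _ = _; simp only [Xq, QuaternionAlgebra.re_add, QuaternionAlgebra.imI_add, QuaternionAlgebra.imJ_add, QuaternionAlgebra.imK_add, QuaternionAlgebra.re_star, QuaternionAlgebra.imI_star, QuaternionAlgebra.imJ_star, QuaternionAlgebra.imK_star, QuaternionAlgebra.re_mul, QuaternionAlgebra.imI_mul, QuaternionAlgebra.imJ_mul, QuaternionAlgebra.imK_mul]; ring)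

theorem Xq_scalar (w u t : F) :
    algebraMap F ℍ[F, w + 1, -1] t = Xq F w u t 0 0 0 := by
  ext <;> (show _ = _; simp [Xq])

theorem Xq_star (w u : F) (hu : 2*u = 1) (a b c d : F) :
    star (Xq F w u a b c d) = Xq F w u (a + c + ((w+1)*(w^2+1))*d) (-b) (-c) (-d) := by
  ext
  · show _ = _
    simp only [Xq, QuaternionAlgebra.re_add, QuaternionAlgebra.imI_add, QuaternionAlgebra.imJ_add, QuaternionAlgebra.imK_add, QuaternionAlgebra.re_star, QuaternionAlgebra.imI_star, QuaternionAlgebra.imJ_star, QuaternionAlgebra.imK_star, QuaternionAlgebra.re_mul, QuaternionAlgebra.imI_mul, QuaternionAlgebra.imJ_mul, QuaternionAlgebra.imK_mul]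
    linear_combination (1*d + 1*c + 1*w*d + 1*w^2*d + 1*w^3*d) * hu
  · show _ = _
    simp only [Xq, QuaternionAlgebra.re_add, QuaternionAlgebra.imI_add, QuaternionAlgebra.imJ_add, QuaternionAlgebra.imK_add, QuaternionAlgebra.re_star, QuaternionAlgebra.imI_star, QuaternionAlgebra.imJ_star, QuaternionAlgebra.imK_star, QuaternionAlgebra.re_mul, QuaternionAlgebra.imI_mul, QuaternionAlgebra.imJ_mul, QuaternionAlgebra.imK_mul]
    ring
  · show _ = _
    simp only [Xq, QuaternionAlgebra.re_add, QuaternionAlgebra.imI_add, QuaternionAlgebra.imJ_add, QuaternionAlgebra.imK_add, QuaternionAlgebra.re_star, QuaternionAlgebra.imI_star, QuaternionAlgebra.imJ_star, QuaternionAlgebra.imK_star, QuaternionAlgebra.re_mul, QuaternionAlgebra.imI_mul, QuaternionAlgebra.imJ_mul, QuaternionAlgebra.imK_mul]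
    ring
  · show _ = _
    simp only [Xq, QuaternionAlgebra.re_add, QuaternionAlgebra.imI_add, QuaternionAlgebra.imJ_add, QuaternionAlgebra.imK_add, QuaternionAlgebra.re_star, QuaternionAlgebra.imI_star, QuaternionAlgebra.imJ_star, QuaternionAlgebra.imK_star, QuaternionAlgebra.re_mul, QuaternionAlgebra.imI_mul, QuaternionAlgebra.imJ_mul, QuaternionAlgebra.imK_mul]
    ring

theorem Xq_mul (w : F) (hw : w ^ 3 - 11 * w - 11 = 0) (u : F) (hu : 2*u = 1) (a b c d A B C D : F) :
    Xq F w u a b c d * Xq F w u A B C D =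
      Xq F w u
        (1*(a*A) + (1 + 1*w)*(b*B) + (12 + 12*w + 1*w^2)*(c*B) + (36 + 39*w + 6*w^2)*(c*C) + (1 + 1*w)*(d*B) + ((-102) + (-141)*w + (-45)*w^2)*(d*D))
        (1*(a*B) + 1*(b*A) + 1*(c*B) + (12 + 12*w + 1*w^2)*(d*B) + ((-36) + (-39)*w + (-6)*w^2)*(c*D) + (36 + 39*w + 6*w^2)*(d*C))
        (1*(a*C) + 1*(c*A) + (1 + 1*w)*(b*D) + 1*(c*C) + (12 + 12*w + 1*w^2)*(c*D) + ((-1) + (-1)*w)*(d*B))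
        (1*(a*D) + 1*(d*A) + 1*(b*C) + (-1)*(c*B) + 1*(d*C) + (12 + 12*w + 1*w^2)*(d*D)) := by
  ext
  · show _ = _
    simp only [Xq, QuaternionAlgebra.re_add, QuaternionAlgebra.imI_add, QuaternionAlgebra.imJ_add, QuaternionAlgebra.imK_add, QuaternionAlgebra.re_star, QuaternionAlgebra.imI_star, QuaternionAlgebra.imJ_star, QuaternionAlgebra.imK_star, QuaternionAlgebra.re_mul, QuaternionAlgebra.imI_mul, QuaternionAlgebra.imJ_mul, QuaternionAlgebra.imK_mul]
    linear_combination ((-35)*d*D*u^2 + 1*c*D*u + 13*c*C*u^2 + 1*c*B + (-3)*w*d*D + 1*w*c*C*u^2 + 1*w^2*c*C*u^2 + 1*w^3*d*D*u^2) * hw + ((-102)*d*D + (-192)*d*D*u + 1*d*C*u + 1*d*B + 1*c*D*u + 36*c*C + 73*c*C*u + 1*c*B + (-108)*w*d*D + (-192)*w*d*D*u + 1*w*d*C*u + 1*w*d*B + 1*w*c*D*u + 39*w*c*C + 78*w*c*C*u + 1*w*c*B + (-12)*w^2*d*D + 1*w^2*d*D*u + 1*w^2*d*C*u + 1*w^2*c*D*u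 + 6*w^2*c*C + 12*w^2*c*C*u + 1*w^2*c*B + 25*w^3*d*D*u + 1*w^3*d*C*u + 1*w^3*c*D*u + 1*w^3*c*B + (-3)*w^4*d*D + 7*w^4*d*D*u + 1*w^5*d*D*u) * hu
  · show _ = _
    simp only [Xq, QuaternionAlgebra.re_add, QuaternionAlgebra.imI_add, QuaternionAlgebra.imJ_add, QuaternionAlgebra.imK_add, QuaternionAlgebra.re_star, QuaternionAlgebra.imI_star, QuaternionAlgebra.imJ_star, QuaternionAlgebra.imK_star, QuaternionAlgebra.re_mul, QuaternionAlgebra.imI_mul, QuaternionAlgebra.imJ_mul, QuaternionAlgebra.imK_mul]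
    linear_combination (1*d*D*u + 13*d*C*u^2 + 1*d*B + (-11)*c*D*u^2 + 1*w*d*C*u^2 + (-1)*w*c*D*u^2 + 1*w^2*d*C*u^2 + 1*w^2*c*D*u^2) * hw + (1*d*D*u + 36*d*C + 73*d*C*u + 1*d*B + (-36)*c*D + (-60)*c*D*u + 1*c*C*u + 1*c*B + 1*w*d*D*u + 39*w*d*C + 78*w*d*C*u + 1*w*d*B + (-39)*w*c*D + (-66)*w*c*D*u + 1*w^2*d*D*u + 6*w^2*d*C + 12*w^2*d*C*u + 1*w^2*d*B + (-6)*w^2*c*D + 1*w^2*c*D*u + 1*w^2*c*C*u + 1*w^3*d*D*u + 1*w^3*d*B + 12*w^3*c*D*u + 1*w^4*c*D*u) * hu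
  · show _ = _
    simp only [Xq, QuaternionAlgebra.re_add, QuaternionAlgebra.imI_add, QuaternionAlgebra.imJ_add, QuaternionAlgebra.imK_add, QuaternionAlgebra.re_star, QuaternionAlgebra.imI_star, QuaternionAlgebra.imJ_star, QuaternionAlgebra.imK_star, QuaternionAlgebra.re_mul, QuaternionAlgebra.imI_mul, QuaternionAlgebra.imJ_mul, QuaternionAlgebra.imK_mul]
    linear_combination (1*d*D*u + 1*w*d*D*u) * hw + (1*d*D*u + 1*d*C*u + 2*w*d*D*u + 1*w*d*C*u + 2*w^2*d*D*u + 2*w^3*d*D*u + 1*w^4*d*D*u) * hu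
  · show _ = _
    simp only [Xq, QuaternionAlgebra.re_add, QuaternionAlgebra.imI_add, QuaternionAlgebra.imJ_add, QuaternionAlgebra.imK_add, QuaternionAlgebra.re_star, QuaternionAlgebra.imI_star, QuaternionAlgebra.imJ_star, QuaternionAlgebra.imK_star, QuaternionAlgebra.re_mul, QuaternionAlgebra.imI_mul, QuaternionAlgebra.imJ_mul, QuaternionAlgebra.imK_mul]
    linear_combination (1*c*D*u) * hw + (1*c*D*u + 1*c*C*u + 1*w*c*D*u + 1*w^2*c*D*u + 1*w^3*c*D*u) * hu

theorem Xq_trace (w : F) (hw : w ^ 3 - 11 * w - 11 = 0) (u : F) (hu : 2*u = 1) (a b c d : F) :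
    Xq F w u a b c d + star (Xq F w u a b c d) =
      algebraMap F ℍ[F, w + 1, -1] (2*a + 1*c + (12 + 12*w + 1*w^2)*d) := by
  rw [Xq_star F w u hu, Xq_add, Xq_scalar F w u]
  ext
  · show _ = _
    simp only [Xq, QuaternionAlgebra.re_add, QuaternionAlgebra.imI_add, QuaternionAlgebra.imJ_add, QuaternionAlgebra.imK_add, QuaternionAlgebra.re_star, QuaternionAlgebra.imI_star, QuaternionAlgebra.imJ_star, QuaternionAlgebra.imK_star, QuaternionAlgebra.re_mul, QuaternionAlgebra.imI_mul, QuaternionAlgebra.imJ_mul, QuaternionAlgebra.imK_mul]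
    linear_combination (1*d) * hw
  · show _ = _
    simp only [Xq, QuaternionAlgebra.re_add, QuaternionAlgebra.imI_add, QuaternionAlgebra.imJ_add, QuaternionAlgebra.imK_add, QuaternionAlgebra.re_star, QuaternionAlgebra.imI_star, QuaternionAlgebra.imJ_star, QuaternionAlgebra.imK_star, QuaternionAlgebra.re_mul, QuaternionAlgebra.imI_mul, QuaternionAlgebra.imJ_mul, QuaternionAlgebra.imK_mul]
    ring
  · show _ = _
    simp only [Xq, QuaternionAlgebra.re_add, QuaternionAlgebra.imI_add, QuaternionAlgebra.imJ_add, QuaternionAlgebra.imK_add, QuaternionAlgebra.re_star, QuaternionAlgebra.imI_star, QuaternionAlgebra.imJ_star, QuaternionAlgebra.imK_star, QuaternionAlgebra.re_mul, QuaternionAlgebra.imI_mul, QuaternionAlgebra.imJ_mul, QuaternionAlgebra.imK_mul]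
    ring
  · show _ = _
    simp only [Xq, QuaternionAlgebra.re_add, QuaternionAlgebra.imI_add, QuaternionAlgebra.imJ_add, QuaternionAlgebra.imK_add, QuaternionAlgebra.re_star, QuaternionAlgebra.imI_star, QuaternionAlgebra.imJ_star, QuaternionAlgebra.imK_star, QuaternionAlgebra.re_mul, QuaternionAlgebra.imI_mul, QuaternionAlgebra.imJ_mul, QuaternionAlgebra.imK_mul]
    ring

theorem Xq_norm (w : F) (hw : w ^ 3 - 11 * w - 11 = 0) (u : F) (hu : 2*u = 1) (a b c d : F) :
    Xq F w u a b c d * star (Xq F w u a b c d) =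
      algebraMap F ℍ[F, w + 1, -1]
        (1*(a*a) + 1*(a*c) + ((-1) + (-1)*w)*(b*b) + ((-12) + (-12)*w + (-1)*w^2)*(b*c) + ((-1) + (-1)*w)*(b*d) + ((-36) + (-39)*w + (-6)*w^2)*(c*c) + (12 + 12*w + 1*w^2)*(a*d) + (102 + 141*w + 45*w^2)*(d*d)) := by
  rw [Xq_star F w u hu, Xq_scalar F w u]
  ext
  · show _ = _
    simp only [Xq, QuaternionAlgebra.re_add, QuaternionAlgebra.imI_add, QuaternionAlgebra.imJ_add, QuaternionAlgebra.imK_add, QuaternionAlgebra.re_star, QuaternionAlgebra.imI_star, QuaternionAlgebra.imJ_star, QuaternionAlgebra.imK_star, QuaternionAlgebra.re_mul, QuaternionAlgebra.imI_mul, QuaternionAlgebra.imJ_mul, QuaternionAlgebra.imK_mul]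
    linear_combination (37*d^2*u^2 + (-13)*c^2*u^2 + (-1)*b*c + 1*a*d + 7*w*d^2*u + (-1)*w*c^2*u^2 + 1*w^2*d^2*u + (-1)*w^2*c^2*u^2 + 1*w^3*d^2*u^2) * hw + (102*d^2 + 203*d^2*u + (-2)*c*d*u + (-36)*c^2 + (-73)*c^2*u + (-1)*b*d + (-1)*b*c + 141*w*d^2 + 203*w*d^2*u + (-2)*w*c*d*u + (-39)*w*c^2 + (-78)*w*c^2*u + (-1)*w*b*d + (-1)*w*b*c + 45*w^2*d^2 + (-1)*w^2*d^2*u + (-2)*w^2*c*d*u + (-6)*w^2*c^2 + (-12)*w^2*c^2*u + (-1)*w^2*b*c + (-15)*w^3*d^2*u + (-2)*w^3*c*d*u + (-1)*w^3*b*c + 4*w^4*d^2*u + (-1)*w^5*d^2*u + (-1)*w^6*d^2*u) * hu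
  · show _ = _
    simp only [Xq, QuaternionAlgebra.re_add, QuaternionAlgebra.imI_add, QuaternionAlgebra.imJ_add, QuaternionAlgebra.imK_add, QuaternionAlgebra.re_star, QuaternionAlgebra.imI_star, QuaternionAlgebra.imJ_star, QuaternionAlgebra.imK_star, QuaternionAlgebra.re_mul, QuaternionAlgebra.imI_mul, QuaternionAlgebra.imJ_mul, QuaternionAlgebra.imK_mul]
    linear_combination ((-1)*d^2*u + (-2)*c*d*u + (-1)*c^2*u + (-1)*b*d + (-1)*b*c + (-1)*w*d^2*u + (-1)*w*c*d*u + (-1)*w*b*d + (-1)*w^2*d^2*u + (-2)*w^2*c*d*u + (-1)*w^2*c^2*u + (-1)*w^2*b*d + (-1)*w^3*d^2*u + (-2)*w^3*c*d*u + (-1)*w^3*b*d + (-1)*w^4*c*d*u + (-1)*w^5*c*d*u) * hu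
  · show _ = _
    simp only [Xq, QuaternionAlgebra.re_add, QuaternionAlgebra.imI_add, QuaternionAlgebra.imJ_add, QuaternionAlgebra.imK_add, QuaternionAlgebra.re_star, QuaternionAlgebra.imI_star, QuaternionAlgebra.imJ_star, QuaternionAlgebra.imK_star, QuaternionAlgebra.re_mul, QuaternionAlgebra.imI_mul, QuaternionAlgebra.imJ_mul, QuaternionAlgebra.imK_mul]
    linear_combination ((-1)*d^2*u + (-1)*c*d*u + (-2)*w*d^2*u + (-1)*w*c*d*u + (-2)*w^2*d^2*u + (-2)*w^3*d^2*u + (-1)*w^4*d^2*u) * hu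
  · show _ = _
    simp only [Xq, QuaternionAlgebra.re_add, QuaternionAlgebra.imI_add, QuaternionAlgebra.imJ_add, QuaternionAlgebra.imK_add, QuaternionAlgebra.re_star, QuaternionAlgebra.imI_star, QuaternionAlgebra.imJ_star, QuaternionAlgebra.imK_star, QuaternionAlgebra.re_mul, QuaternionAlgebra.imI_mul, QuaternionAlgebra.imJ_mul, QuaternionAlgebra.imK_mul]
    linear_combination ((-1)*c*d*u + (-1)*c^2*u + (-1)*w*c*d*u + (-1)*w^2*c*d*u + (-1)*w^3*c*d*u) * hu

end StmtAux

theorem stmt13 (F : Type) [Field F] [NumberField F] (w : F)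
    (hw : w ^ 3 - 11 * w - 11 = 0) (hgen : Algebra.adjoin ℚ {w} = ⊤)
    (hint : ∀ x : F, IsIntegral ℤ x ↔ x ∈ Algebra.adjoin ℤ {w}) :
    let B := ℍ[F, w + 1, -1]
    let i : B := ⟨0, 1, 0, 0⟩
    let k : B := ((2 : F)⁻¹) • (1 + (w ^ 2 + 1) • i + i * ⟨0, 0, 1, 0⟩)
    (∀ x ∈ Algebra.adjoin ℤ ({algebraMap F B w, i, k} : Set B),
        ∃ t n : F, IsIntegral ℤ t ∧ IsIntegral ℤ n ∧
          x + star x = algebraMap F B t ∧ x * star x = algebraMap F B n) ∧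
    Submodule.span F ((Algebra.adjoin ℤ ({algebraMap F B w, i, k} : Set B) : Set B)) = ⊤ := by
  intro B i k
  have hidef : i = (⟨0, 1, 0, 0⟩ : ℍ[F, w + 1, -1]) := rfl
  have hkdef : k = ((((2 : F)⁻¹) • (1 + (w ^ 2 + 1) • (⟨0, 1, 0, 0⟩ : ℍ[F, w + 1, -1]) + (⟨0, 1, 0, 0⟩ : ℍ[F, w + 1, -1]) * ⟨0, 0, 1, 0⟩)) : ℍ[F, w + 1, -1]) := rfl
  have h2 : (2:F) ≠ 0 := two_ne_zero
  set u : F := (2:F)⁻¹ with hudef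
  have hu : 2*u = 1 := mul_inv_cancel₀ h2
  have hw1 : w + 1 ≠ 0 := by
    intro h
    have hwm : w = -1 := by linear_combination h
    rw [hwm] at hw; norm_num at hw
  set R := Algebra.adjoin ℤ ({w} : Set F) with hRdef
  have hwR : w ∈ R := Algebra.subset_adjoin (Set.mem_singleton w)
  have hw2R : w^2 ∈ R := pow_mem hwR 2
  have hnat : ∀ n : ℕ, ((n : ℕ) : F) ∈ R := fun n => R.natCast_mem n
  have h1R : (1:F) ∈ R := R.one_mem
  have h2R : (2:F) ∈ R := by have := hnat 2; exact_mod_cast this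
  have h6R : (6:F) ∈ R := by have := hnat 6; exact_mod_cast this
  have h12R : (12:F) ∈ R := by have := hnat 12; exact_mod_cast this
  have h36R : (36:F) ∈ R := by have := hnat 36; exact_mod_cast this
  have h39R : (39:F) ∈ R := by have := hnat 39; exact_mod_cast this
  have h45R : (45:F) ∈ R := by have := hnat 45; exact_mod_cast this
  have h102R : (102:F) ∈ R := by have := hnat 102; exact_mod_cast this
  have h141R : (141:F) ∈ R := by have := hnat 141; exact_mod_cast this
  -- coordinates of the generators
  have hkX : k = Xq F w u 0 0 1 0 := by
    rw [hkdef]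
    ext <;> (show _ = _; simp only [Xq, QuaternionAlgebra.re_add, QuaternionAlgebra.imI_add, QuaternionAlgebra.imJ_add, QuaternionAlgebra.imK_add, QuaternionAlgebra.re_sub, QuaternionAlgebra.imI_sub, QuaternionAlgebra.imJ_sub, QuaternionAlgebra.imK_sub, QuaternionAlgebra.re_smul, QuaternionAlgebra.imI_smul, QuaternionAlgebra.imJ_smul, QuaternionAlgebra.imK_smul, QuaternionAlgebra.re_one, QuaternionAlgebra.imI_one, QuaternionAlgebra.imJ_one, QuaternionAlgebra.imK_one, QuaternionAlgebra.re_mul, QuaternionAlgebra.imI_mul, QuaternionAlgebra.imJ_mul, QuaternionAlgebra.imK_mul, smul_eq_mul]) <;> ring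
  have hiX : i = Xq F w u 0 1 0 0 := by
    rw [hidef]; ext <;> (show _ = _; simp only [Xq, QuaternionAlgebra.re_add, QuaternionAlgebra.imI_add, QuaternionAlgebra.imJ_add, QuaternionAlgebra.imK_add, QuaternionAlgebra.re_sub, QuaternionAlgebra.imI_sub, QuaternionAlgebra.imJ_sub, QuaternionAlgebra.imK_sub, QuaternionAlgebra.re_smul, QuaternionAlgebra.imI_smul, QuaternionAlgebra.imJ_smul, QuaternionAlgebra.imK_smul, QuaternionAlgebra.re_one, QuaternionAlgebra.imI_one, QuaternionAlgebra.imJ_one, QuaternionAlgebra.imK_one, QuaternionAlgebra.re_mul, QuaternionAlgebra.imI_mul, QuaternionAlgebra.imJ_mul, QuaternionAlgebra.imK_mul, smul_eq_mul]) <;> ring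
  have hwX : algebraMap F B w = Xq F w u w 0 0 0 := Xq_scalar F w u w
  -- every element of the adjoin has the canonical form
  have hS : ∀ x ∈ Algebra.adjoin ℤ ({algebraMap F B w, i, k} : Set B),
      ∃ a b c d : F, a ∈ R ∧ b ∈ R ∧ c ∈ R ∧ d ∈ R ∧ x = Xq F w u a b c d := by
    intro x hx
    induction hx using Algebra.adjoin_induction with
    | mem y hy =>
      rcases hy with hy | hy | hy
      · exact ⟨w, 0, 0, 0, hwR, R.zero_mem, R.zero_mem, R.zero_mem, by rw [hy, hwX]⟩
      · exact ⟨0, 1, 0, 0, R.zero_mem, h1R, R.zero_mem, R.zero_mem, by rw [hy, hiX]⟩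
      · exact ⟨0, 0, 1, 0, R.zero_mem, R.zero_mem, h1R, R.zero_mem, by
          rw [Set.mem_singleton_iff] at hy; rw [hy, hkX]⟩
    | algebraMap r =>
      refine ⟨(r : F), 0, 0, 0, ?_, R.zero_mem, R.zero_mem, R.zero_mem, ?_⟩
      · exact R.intCast_mem r
      · have h1 : algebraMap ℤ B r = algebraMap F B ((r : ℤ) : F) := by
          rw [algebraMap_int_eq, map_intCast (algebraMap F B) r]; rfl
        rw [h1, Xq_scalar F w u]
    | add x y hx hy ihx ihy =>
      obtain ⟨a, b, c, d, ha, hb, hc, hd, rfl⟩ := ihx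
      obtain ⟨A, B', C, D, hA, hB, hC, hD, rfl⟩ := ihy
      exact ⟨a + A, b + B', c + C, d + D, add_mem ha hA, add_mem hb hB, add_mem hc hC,
        add_mem hd hD, Xq_add F w u a b c d A B' C D⟩
    | mul x y hx hy ihx ihy =>
      obtain ⟨a, b, c, d, ha, hb, hc, hd, rfl⟩ := ihx
      obtain ⟨A, B', C, D, hA, hB, hC, hD, rfl⟩ := ihy
      refine ⟨_, _, _, _, ?_, ?_, ?_, ?_, Xq_mul F w hw u hu a b c d A B' C D⟩
      · exact (add_mem (add_mem (add_mem (add_mem (add_mem (mul_mem h1R (mul_mem ha hA)) (mul_mem (add_mem h1R (mul_mem h1R hwR)) (mul_mem hb hB))) (mul_mem (add_mem (add_mem h12R (mul_mem h12R hwR)) (mul_mem h1R hw2R)) (mul_mem hc hB))) (mul_mem (add_mem (add_mem h36R (mul_mem h39R hwR)) (mul_mem h6R hw2R)) (mul_mem hc hC))) (mul_mem (add_mem h1R (mul_mem h1R hwR)) (mul_mem hd hB))) (mul_mem (add_mem (add_mem (neg_mem h102R) (mul_mem (neg_mem h141R) hwR)) (mul_mem (neg_mem h45R) hw2R)) (mul_mem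 hd hD)))
      · exact (add_mem (add_mem (add_mem (add_mem (add_mem (mul_mem h1R (mul_mem ha hB)) (mul_mem h1R (mul_mem hb hA))) (mul_mem h1R (mul_mem hc hB))) (mul_mem (add_mem (add_mem h12R (mul_mem h12R hwR)) (mul_mem h1R hw2R)) (mul_mem hd hB))) (mul_mem (add_mem (add_mem (neg_mem h36R) (mul_mem (neg_mem h39R) hwR)) (mul_mem (neg_mem h6R) hw2R)) (mul_mem hc hD))) (mul_mem (add_mem (add_mem h36R (mul_mem h39R hwR)) (mul_mem h6R hw2R)) (mul_mem hd hC)))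
      · exact (add_mem (add_mem (add_mem (add_mem (add_mem (mul_mem h1R (mul_mem ha hC)) (mul_mem h1R (mul_mem hc hA))) (mul_mem (add_mem h1R (mul_mem h1R hwR)) (mul_mem hb hD))) (mul_mem h1R (mul_mem hc hC))) (mul_mem (add_mem (add_mem h12R (mul_mem h12R hwR)) (mul_mem h1R hw2R)) (mul_mem hc hD))) (mul_mem (add_mem (neg_mem h1R) (mul_mem (neg_mem h1R) hwR)) (mul_mem hd hB)))
      · exact (add_mem (add_mem (add_mem (add_mem (add_mem (mul_mem h1R (mul_mem ha hD)) (mul_mem h1R (mul_mem hd hA))) (mul_mem h1R (mul_mem hb hC))) (mul_mem (neg_mem h1R) (mul_mem hc hB))) (mul_mem h1R (mul_mem hd hC))) (mul_mem (add_mem (add_mem h12R (mul_mem h12R hwR)) (mul_mem h1R hw2R)) (mul_mem hd hD)))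
  constructor
  · -- integrality of trace and norm
    intro x hx
    obtain ⟨a, b, c, d, ha, hb, hc, hd, rfl⟩ := hS x hx
    refine ⟨2*a + 1*c + (12 + 12*w + 1*w^2)*d,
      1*(a*a) + 1*(a*c) + ((-1) + (-1)*w)*(b*b) + ((-12) + (-12)*w + (-1)*w^2)*(b*c) + ((-1) + (-1)*w)*(b*d) + ((-36) + (-39)*w + (-6)*w^2)*(c*c) + (12 + 12*w + 1*w^2)*(a*d) + (102 + 141*w + 45*w^2)*(d*d),
      ?_, ?_, ?_, ?_⟩
    · exact (hint _).mpr (add_mem (add_mem (mul_mem h2R ha) (mul_mem h1R hc)) (mul_mem (add_mem (add_mem h12R (mul_mem h12R hwR)) (mul_mem h1R hw2R)) hd))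
    · exact (hint _).mpr (add_mem (add_mem (add_mem (add_mem (add_mem (add_mem (add_mem (mul_mem h1R (mul_mem ha ha)) (mul_mem h1R (mul_mem ha hc))) (mul_mem (add_mem (neg_mem h1R) (mul_mem (neg_mem h1R) hwR)) (mul_mem hb hb))) (mul_mem (add_mem (add_mem (neg_mem h12R) (mul_mem (neg_mem h12R) hwR)) (mul_mem (neg_mem h1R) hw2R)) (mul_mem hb hc))) (mul_mem (add_mem (neg_mem h1R) (mul_mem (neg_mem h1R) hwR)) (mul_mem hb hd))) (mul_mem (add_mem (add_mem (neg_mem h36R) (mul_mem (neg_mem h39R) hwR)) (mul_mem (neg_mem h6R) hw2R)) (mul_mem hc hc))) (mul_mem (add_mem (add_mem h12R (mul_mem h12R hwR)) (mul_mem h1R hw2R)) (mul_mem ha hd))) (mul_mem (add_mem (add_mem h102R (mul_mem h141R hwR)) (mul_mem h45R hw2R)) (mul_mem hd hd)))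
    · exact Xq_trace F w hw u hu a b c d
    · exact Xq_norm F w hw u hu a b c d
  · -- spanning
    rw [Submodule.eq_top_iff']
    intro x
    have hiA : i ∈ Algebra.adjoin ℤ ({algebraMap F B w, i, k} : Set B) :=
      Algebra.subset_adjoin (by simp)
    have hkA : k ∈ Algebra.adjoin ℤ ({algebraMap F B w, i, k} : Set B) :=
      Algebra.subset_adjoin (by simp)
    have h1A : (1 : B) ∈ Algebra.adjoin ℤ ({algebraMap F B w, i, k} : Set B) := one_mem _
    have hmA : i * k ∈ Algebra.adjoin ℤ ({algebraMap F B w, i, k} : Set B) := mul_mem hiA hkA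
    have h1s := Submodule.subset_span (R := F) h1A
    have his := Submodule.subset_span (R := F) hiA
    have hks := Submodule.subset_span (R := F) hkA
    have hms := Submodule.subset_span (R := F) hmA
    have hmX : i * k = Xq F w u 0 0 0 1 := by
      rw [hiX, hkX, Xq_mul F w hw u hu]
      norm_num
    have hijs : (⟨0, 0, 0, 1⟩ : ℍ[F, w + 1, -1]) ∈
        Submodule.span F ((Algebra.adjoin ℤ ({algebraMap F B w, i, k} : Set B) : Set B)) := by
      have hrepr : (⟨0, 0, 0, 1⟩ : ℍ[F, w + 1, -1]) =
          (2:F) • Xq F w u 0 0 1 0 - 1 - (w^2+1) • Xq F w u 0 1 0 0 := by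
        ext
        · show _ = _; simp only [Xq, QuaternionAlgebra.re_add, QuaternionAlgebra.imI_add, QuaternionAlgebra.imJ_add, QuaternionAlgebra.imK_add, QuaternionAlgebra.re_sub, QuaternionAlgebra.imI_sub, QuaternionAlgebra.imJ_sub, QuaternionAlgebra.imK_sub, QuaternionAlgebra.re_smul, QuaternionAlgebra.imI_smul, QuaternionAlgebra.imJ_smul, QuaternionAlgebra.imK_smul, QuaternionAlgebra.re_one, QuaternionAlgebra.imI_one, QuaternionAlgebra.imJ_one, QuaternionAlgebra.imK_one, QuaternionAlgebra.re_mul, QuaternionAlgebra.imI_mul, QuaternionAlgebra.imJ_mul, QuaternionAlgebra.imK_mul, smul_eq_mul]; linear_combination -hu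
        · show _ = _; simp only [Xq, QuaternionAlgebra.re_add, QuaternionAlgebra.imI_add, QuaternionAlgebra.imJ_add, QuaternionAlgebra.imK_add, QuaternionAlgebra.re_sub, QuaternionAlgebra.imI_sub, QuaternionAlgebra.imJ_sub, QuaternionAlgebra.imK_sub, QuaternionAlgebra.re_smul, QuaternionAlgebra.imI_smul, QuaternionAlgebra.imJ_smul, QuaternionAlgebra.imK_smul, QuaternionAlgebra.re_one, QuaternionAlgebra.imI_one, QuaternionAlgebra.imJ_one, QuaternionAlgebra.imK_one, QuaternionAlgebra.re_mul, QuaternionAlgebra.imI_mul, QuaternionAlgebra.imJ_mul, QuaternionAlgebra.imK_mul, smul_eq_mul]; linear_combination (-(w^2+1))*hu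
        · show _ = _; simp only [Xq, QuaternionAlgebra.re_add, QuaternionAlgebra.imI_add, QuaternionAlgebra.imJ_add, QuaternionAlgebra.imK_add, QuaternionAlgebra.re_sub, QuaternionAlgebra.imI_sub, QuaternionAlgebra.imJ_sub, QuaternionAlgebra.imK_sub, QuaternionAlgebra.re_smul, QuaternionAlgebra.imI_smul, QuaternionAlgebra.imJ_smul, QuaternionAlgebra.imK_smul, QuaternionAlgebra.re_one, QuaternionAlgebra.imI_one, QuaternionAlgebra.imJ_one, QuaternionAlgebra.imK_one, QuaternionAlgebra.re_mul, QuaternionAlgebra.imI_mul, QuaternionAlgebra.imJ_mul, QuaternionAlgebra.imK_mul, smul_eq_mul]; ring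
        · show _ = _; simp only [Xq, QuaternionAlgebra.re_add, QuaternionAlgebra.imI_add, QuaternionAlgebra.imJ_add, QuaternionAlgebra.imK_add, QuaternionAlgebra.re_sub, QuaternionAlgebra.imI_sub, QuaternionAlgebra.imJ_sub, QuaternionAlgebra.imK_sub, QuaternionAlgebra.re_smul, QuaternionAlgebra.imI_smul, QuaternionAlgebra.imJ_smul, QuaternionAlgebra.imK_smul, QuaternionAlgebra.re_one, QuaternionAlgebra.imI_one, QuaternionAlgebra.imJ_one, QuaternionAlgebra.imK_one, QuaternionAlgebra.re_mul, QuaternionAlgebra.imI_mul, QuaternionAlgebra.imJ_mul, QuaternionAlgebra.imK_mul, smul_eq_mul]; linear_combination -hu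
      rw [hrepr]
      exact sub_mem (sub_mem (Submodule.smul_mem _ _ (hkX ▸ hks)) h1s)
        (Submodule.smul_mem _ _ (hiX ▸ his))
    have hjs : (⟨0, 0, 1, 0⟩ : ℍ[F, w + 1, -1]) ∈
        Submodule.span F ((Algebra.adjoin ℤ ({algebraMap F B w, i, k} : Set B) : Set B)) := by
      have hrepr : (w+1) • (⟨0, 0, 1, 0⟩ : ℍ[F, w + 1, -1]) =
          (2:F) • Xq F w u 0 0 0 1 - ((w^2+1)*(w+1)) • 1 - Xq F w u 0 1 0 0 := by
        ext
        · show _ = _; simp only [Xq, QuaternionAlgebra.re_add, QuaternionAlgebra.imI_add, QuaternionAlgebra.imJ_add, QuaternionAlgebra.imK_add, QuaternionAlgebra.re_sub, QuaternionAlgebra.imI_sub, QuaternionAlgebra.imJ_sub, QuaternionAlgebra.imK_sub, QuaternionAlgebra.re_smul, QuaternionAlgebra.imI_smul, QuaternionAlgebra.imJ_smul, QuaternionAlgebra.imK_smul, QuaternionAlgebra.re_one, QuaternionAlgebra.imI_one, QuaternionAlgebra.imJ_one, QuaternionAlgebra.imK_one, QuaternionAlgebra.re_mul, QuaternionAlgebra.imI_mul,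 QuaternionAlgebra.imJ_mul, QuaternionAlgebra.imK_mul, smul_eq_mul]; linear_combination (-((w+1)*(w^2+1)))*hu
        · show _ = _; simp only [Xq, QuaternionAlgebra.re_add, QuaternionAlgebra.imI_add, QuaternionAlgebra.imJ_add, QuaternionAlgebra.imK_add, QuaternionAlgebra.re_sub, QuaternionAlgebra.imI_sub, QuaternionAlgebra.imJ_sub, QuaternionAlgebra.imK_sub, QuaternionAlgebra.re_smul, QuaternionAlgebra.imI_smul, QuaternionAlgebra.imJ_smul, QuaternionAlgebra.imK_smul, QuaternionAlgebra.re_one, QuaternionAlgebra.imI_one, QuaternionAlgebra.imJ_one, QuaternionAlgebra.imK_one, QuaternionAlgebra.re_mul, QuaternionAlgebra.imI_mul, QuaternionAlgebra.imJ_mul, QuaternionAlgebra.imK_mul, smul_eq_mul]; linear_combination -hu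
        · show _ = _; simp only [Xq, QuaternionAlgebra.re_add, QuaternionAlgebra.imI_add, QuaternionAlgebra.imJ_add, QuaternionAlgebra.imK_add, QuaternionAlgebra.re_sub, QuaternionAlgebra.imI_sub, QuaternionAlgebra.imJ_sub, QuaternionAlgebra.imK_sub, QuaternionAlgebra.re_smul, QuaternionAlgebra.imI_smul, QuaternionAlgebra.imJ_smul, QuaternionAlgebra.imK_smul, QuaternionAlgebra.re_one, QuaternionAlgebra.imI_one, QuaternionAlgebra.imJ_one, QuaternionAlgebra.imK_one, QuaternionAlgebra.re_mul, QuaternionAlgebra.imI_mul, QuaternionAlgebra.imJ_mul, QuaternionAlgebra.imK_mul, smul_eq_mul]; linear_combination (-(w+1))*hu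
        · show _ = _; simp only [Xq, QuaternionAlgebra.re_add, QuaternionAlgebra.imI_add, QuaternionAlgebra.imJ_add, QuaternionAlgebra.imK_add, QuaternionAlgebra.re_sub, QuaternionAlgebra.imI_sub, QuaternionAlgebra.imJ_sub, QuaternionAlgebra.imK_sub, QuaternionAlgebra.re_smul, QuaternionAlgebra.imI_smul, QuaternionAlgebra.imJ_smul, QuaternionAlgebra.imK_smul, QuaternionAlgebra.re_one, QuaternionAlgebra.imI_one, QuaternionAlgebra.imJ_one, QuaternionAlgebra.imK_one, QuaternionAlgebra.re_mul, QuaternionAlgebra.imI_mul, QuaternionAlgebra.imJ_mul, QuaternionAlgebra.imK_mul, smul_eq_mul]; ring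
      have hj2 : (⟨0, 0, 1, 0⟩ : ℍ[F, w + 1, -1]) =
          (w+1)⁻¹ • ((w+1) • (⟨0, 0, 1, 0⟩ : ℍ[F, w + 1, -1])) := by
        rw [smul_smul, inv_mul_cancel₀ hw1, one_smul]
      rw [hj2, hrepr]
      exact Submodule.smul_mem _ _ (sub_mem (sub_mem (Submodule.smul_mem _ _ (hmX ▸ hms))
        (Submodule.smul_mem _ _ h1s)) (hiX ▸ his))
    obtain ⟨p, q, r, s⟩ := x
    have hx : (⟨p, q, r, s⟩ : ℍ[F, w + 1, -1]) =
        p • (1 : ℍ[F, w + 1, -1]) + q • (⟨0, 1, 0, 0⟩ : ℍ[F, w + 1, -1]) + r • (⟨0, 0, 1, 0⟩ : ℍ[F, w + 1, -1]) + s • (⟨0, 0, 0, 1⟩ : ℍ[F, w + 1, -1]) := by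
      ext <;> (show _ = _; simp only [Xq, QuaternionAlgebra.re_add, QuaternionAlgebra.imI_add, QuaternionAlgebra.imJ_add, QuaternionAlgebra.imK_add, QuaternionAlgebra.re_sub, QuaternionAlgebra.imI_sub, QuaternionAlgebra.imJ_sub, QuaternionAlgebra.imK_sub, QuaternionAlgebra.re_smul, QuaternionAlgebra.imI_smul, QuaternionAlgebra.imJ_smul, QuaternionAlgebra.imK_smul, QuaternionAlgebra.re_one, QuaternionAlgebra.imI_one, QuaternionAlgebra.imJ_one, QuaternionAlgebra.imK_one, QuaternionAlgebra.re_mul, QuaternionAlgebra.imI_mul, QuaternionAlgebra.imJ_mul, QuaternionAlgebra.imK_mul, smul_eq_mul]) <;> ring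
    rw [hx]
    exact add_mem (add_mem (add_mem (Submodule.smul_mem _ _ h1s)
      (Submodule.smul_mem _ _ (hidef ▸ his)))
      (Submodule.smul_mem _ _ hjs)) (Submodule.smul_mem _ _ hijs)
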